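/- Let L be a subfield of a central division algebra D of degree d over a local field F, with L ⊇ F, residue degree a and ramification degree b over F. With respect to a uniformizer π of D (π^d a uniformizer of F), the dimension r_i(L) of the i-th graded piece of L in the filtration by powers of π equals a if d/b divides i and 0 otherwise. -/

import Mathlib

/-- Let `D` be a central division algebra of degree `d` over a local field `F`, equipped
with its discrete valuation `ν` (normalized so that a uniformizer `π` of `D` has `ν π = 1`
and `ν(F^×) = dℤ`).  Let `L` be a subfield of `D` containing `F` with residue degree `a`
and ramification degree `b` over `F` (so the residue field of `F` has some finite
cardinality `Q`, that of `L` has cardinality `Q^a`, and `ν(L^×) = (d/b)ℤ`).  Then the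
`i`-th graded piece `ρ_i(L)` of `L` for the filtration by powers of `π` — i.e. the image
of `(L ∩ π^i O_D)/(L ∩ π^{i+1} O_D)` in `π^i O_D/π^{i+1} O_D` — has dimension `a` over the
residue field of `F` if `(d/b) ∣ i`, and dimension `0` otherwise.  Equivalently (and as
formalized here, via finite transversals): the set of elements of `L` of valuation `≥ i`
meets exactly `Q^a` classes modulo valuation `≥ i+1` if `(d/b) ∣ i`, and exactly `1`
class otherwise. -/
theorem stmt_17 (D : Type*) [DivisionRing D] (ν : D → WithTop ℤ)
    (hν0 : ∀ x : D, ν x = ⊤ ↔ x = 0)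
    (hνmul : ∀ x y : D, ν (x * y) = ν x + ν y)
    (hνadd : ∀ x y : D, min (ν x) (ν y) ≤ ν (x + y))
    (F L : Subfield D) (hFL : F ≤ L)
    (hFcentral : ∀ x ∈ F, ∀ y : D, x * y = y * x)
    (d a b : ℕ) (hd : 0 < d) (ha : 0 < a) (hb : 0 < b) (hbd : b ∣ d)
    (π : D) (hπ : ν π = (1 : ℤ))
    -- `F` has a uniformizer of valuation `d` and `ν(F^×) = dℤ`:
    (hτ : ∃ τ ∈ F, ν τ = (d : ℤ))
    (hFval : ∀ x ∈ F, x ≠ 0 → ∃ z : ℤ, ν x = (d : ℤ) * z)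
    -- `L` has ramification degree `b` over `F`, i.e. `ν(L^×) = (d/b)ℤ`:
    (hLunif : ∃ t ∈ L, ν t = ((d / b : ℕ) : ℤ))
    (hLval : ∀ x ∈ L, x ≠ 0 → ∃ z : ℤ, ν x = ((d / b : ℕ) : ℤ) * z)
    -- the residue field of `F` has `Q` elements:
    (Q : ℕ) (hQ : 1 < Q)
    (hresF : ∃ s : Finset D, s.card = Q ∧ (∀ x ∈ s, x ∈ F ∧ (0 : WithTop ℤ) ≤ ν x) ∧
      ∀ y ∈ F, (0 : WithTop ℤ) ≤ ν y → ∃! x, x ∈ s ∧ (1 : WithTop ℤ) ≤ ν (y - x))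
    -- `L` has residue degree `a` over `F`, i.e. its residue field has `Q^a` elements:
    (hresL : ∃ s : Finset D, s.card = Q ^ a ∧ (∀ x ∈ s, x ∈ L ∧ (0 : WithTop ℤ) ≤ ν x) ∧
      ∀ y ∈ L, (0 : WithTop ℤ) ≤ ν y → ∃! x, x ∈ s ∧ (1 : WithTop ℤ) ≤ ν (y - x))
    (i : ℕ) :
    ∃ s : Finset D, s.card = (if (d / b) ∣ i then Q ^ a else 1) ∧
      (∀ x ∈ s, x ∈ L ∧ ((i : ℤ) : WithTop ℤ) ≤ ν x) ∧
      ∀ y ∈ L, ((i : ℤ) : WithTop ℤ) ≤ ν y →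
        ∃! x, x ∈ s ∧ (((i : ℤ) + 1 : ℤ) : WithTop ℤ) ≤ ν (y - x) := by
  classical
  obtain ⟨t, htL, hνt⟩ := hLunif
  set e : ℕ := d / b with he_def
  have he : 0 < e := Nat.div_pos (Nat.le_of_dvd hd hbd) hb
  have hν1 : ν 1 = 0 := by
    have h := hνmul 1 1
    rw [one_mul] at h
    have h1 : ν (1 : D) ≠ ⊤ := fun hh => one_ne_zero ((hν0 1).mp hh)
    lift ν (1 : D) to ℤ using h1 with n
    rw [← WithTop.coe_add, WithTop.coe_eq_coe] at h
    have : n = 0 := by omega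
    simp [this]
  have ht0 : t ≠ 0 := by
    intro h
    rw [h, (hν0 0).mpr rfl] at hνt
    exact absurd hνt.symm (WithTop.coe_ne_top)
  by_cases hdvd : e ∣ i
  · obtain ⟨k, hk⟩ := hdvd
    obtain ⟨s, hscard, hsmem, hstrans⟩ := hresL
    have htk0 : t ^ k ≠ 0 := pow_ne_zero _ ht0
    have hνtk : ν (t ^ k) = ((i : ℤ) : WithTop ℤ) := by
      have key : ∀ n : ℕ, ν (t ^ n) = (((n * e : ℕ) : ℤ) : WithTop ℤ) := by
        intro n
        induction n with
        | zero => simpa using hν1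
        | succ m ih =>
            rw [pow_succ, hνmul, ih, hνt, ← WithTop.coe_add]
            congr 1
            push_cast
            ring
      rw [key k, hk]
      congr 1
      push_cast
      ring
    have hνtki : ν ((t ^ k)⁻¹) = ((-(i : ℤ) : ℤ) : WithTop ℤ) := by
      have h := hνmul (t ^ k) ((t ^ k)⁻¹)
      rw [mul_inv_cancel₀ htk0, hν1, hνtk] at h
      have hne : ν ((t ^ k)⁻¹) ≠ ⊤ := fun hh => inv_ne_zero htk0 ((hν0 _).mp hh)
      lift ν ((t ^ k)⁻¹) to ℤ using hne with n
      rw [show ((0 : WithTop ℤ)) = ((0 : ℤ) : WithTop ℤ) from rfl, ← WithTop.coe_add,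
        WithTop.coe_eq_coe] at h
      rw [WithTop.coe_eq_coe]
      omega
    refine ⟨s.image (fun x => t ^ k * x), ?_, ?_, ?_⟩
    · rw [Finset.card_image_of_injective _ (fun x y h => mul_left_cancel₀ htk0 h), hscard,
        if_pos ⟨k, hk⟩]
    · intro x hx
      obtain ⟨z, hz, rfl⟩ := Finset.mem_image.mp hx
      obtain ⟨hzL, hzν⟩ := hsmem z hz
      refine ⟨L.mul_mem (L.pow_mem htL k) hzL, ?_⟩
      rw [hνmul, hνtk]
      calc ((i : ℤ) : WithTop ℤ) = ((i : ℤ) : WithTop ℤ) + 0 := by rw [add_zero]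
        _ ≤ ((i : ℤ) : WithTop ℤ) + ν z := add_le_add_right hzν _
    · intro y hyL hνy
      set z := (t ^ k)⁻¹ * y with hz_def
      have hzL : z ∈ L := L.mul_mem (L.inv_mem (L.pow_mem htL k)) hyL
      have hzν : (0 : WithTop ℤ) ≤ ν z := by
        rw [hz_def, hνmul, hνtki]
        calc (0 : WithTop ℤ) = ((-(i : ℤ) : ℤ) : WithTop ℤ) + ((i : ℤ) : WithTop ℤ) := by
              rw [← WithTop.coe_add]
              norm_num
          _ ≤ ((-(i : ℤ) : ℤ) : WithTop ℤ) + ν y := add_le_add_right hνy _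
      have hyz : y = t ^ k * z := by
        rw [hz_def, ← mul_assoc, mul_inv_cancel₀ htk0, one_mul]
      have key : ∀ x : D, ν (y - t ^ k * x) = ((i : ℤ) : WithTop ℤ) + ν (z - x) := by
        intro x
        rw [hyz, ← mul_sub, hνmul, hνtk]
      have hiter : ∀ x : D,
          ((((i : ℤ) + 1 : ℤ)) : WithTop ℤ) ≤ ν (y - t ^ k * x) ↔ (1 : WithTop ℤ) ≤ ν (z - x) := by
        intro x
        rw [key x, show ((((i : ℤ) + 1 : ℤ)) : WithTop ℤ)
            = ((i : ℤ) : WithTop ℤ) + ((1 : ℤ) : WithTop ℤ) from by rw [← WithTop.coe_add],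
          show ((1 : ℤ) : WithTop ℤ) = (1 : WithTop ℤ) from rfl]
        exact WithTop.add_le_add_iff_left (WithTop.coe_ne_top)
      obtain ⟨x, ⟨hxs, hx1⟩, hxuniq⟩ := hstrans z hzL hzν
      refine ⟨t ^ k * x, ⟨Finset.mem_image_of_mem _ hxs, (hiter x).mpr hx1⟩, ?_⟩
      rintro x' ⟨hx's, hx'1⟩
      obtain ⟨x₀, hx₀s, rfl⟩ := Finset.mem_image.mp hx's
      rw [hxuniq x₀ ⟨hx₀s, (hiter x₀).mp hx'1⟩]
  · refine ⟨{0}, by rw [if_neg hdvd]; simp, ?_, ?_⟩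
    · intro x hx
      rw [Finset.mem_singleton] at hx
      subst hx
      exact ⟨L.zero_mem, by rw [(hν0 0).mpr rfl]; exact le_top⟩
    · intro y hyL hνy
      refine ⟨0, ⟨Finset.mem_singleton_self 0, ?_⟩,
        fun x hx => Finset.mem_singleton.mp hx.1⟩
      rw [sub_zero]
      rcases eq_or_ne y 0 with rfl | hy0
      · rw [(hν0 0).mpr rfl]; exact le_top
      · obtain ⟨z, hz⟩ := hLval y hyL hy0
        rw [hz, ← WithTop.coe_mul] at hνy ⊢
        rw [WithTop.coe_le_coe] at hνy ⊢
        have hne : ((e : ℕ) : ℤ) * z ≠ (i : ℤ) := by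
          intro h
          apply hdvd
          have hdz : (e : ℤ) ∣ (i : ℤ) := ⟨z, h.symm⟩
          exact_mod_cast hdz
        omega
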